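/- Let F : ℝ → ℝ be the distribution function of a real-valued random variable, let t* ∈ ℝ satisfy 0 < F(t*) < 1, and suppose F is differentiable at t* with derivative f(t*) > 0; set ε = f(t*)/F(t*). Let (c_n) and (l_n) be sequences of positive integers with c_n → ∞, l_n → ∞, and l_n · F(t*)^{c_n} → 1. For each n let T^{(n)}_{i,j} (1 ≤ i ≤ c_n, 1 ≤ j ≤ l_n) be i.i.d. real random variables with distribution function F, and let ∨_min^{(n)} = min_j max_i T^{(n)}_{i,j}. Then for every real t, P( c_n · (∨_min^{(n)} − t*) > t ) converges, as n → ∞, to exp(−exp(ε t)). Equivalently, the scaled Min-Max c_n(∨_min^{(n)} − t*) converges in law to −η·G where η = 1/ε = F(t*)/f(t*) and G is a standard Gumbel random variable. -/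

import Mathlib

open MeasureTheory ProbabilityTheory Filter


/-- Single-column probability: the probability that all `cc` entries of column `j`
are `≤ s` is `(ofReal q)^cc`, hence the column maximum exceeds `s` with probability
`1 - (ofReal q)^cc`. -/
lemma col_prob {Ω : Type*} [MeasurableSpace Ω] (P : Measure Ω) [IsProbabilityMeasure P]
    {cc ll : ℕ} (f : Fin cc → Fin ll → Ω → ℝ)
    (hmeas : ∀ i j, Measurable (f i j))
    (hind : iIndepFun
      (fun p : Fin cc × Fin ll => f p.1 p.2) P)
    (s q : ℝ) (hq : ∀ i j, P {ω | f i j ω ≤ s} = ENNReal.ofReal q) (j : Fin ll) :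
    P {ω | ∃ i, s < f i j ω} = 1 - (ENNReal.ofReal q) ^ cc := by
  have hBset : {ω : Ω | ∃ i, s < f i j ω} = (⋂ i, f i j ⁻¹' Set.Iic s)ᶜ := by
    ext ω
    simp [Set.mem_iInter, not_forall, not_le]
  have hBmeas : MeasurableSet (⋂ i, f i j ⁻¹' Set.Iic s) :=
    MeasurableSet.iInter fun i => (hmeas i j) measurableSet_Iic
  have hPB : P (⋂ i, f i j ⁻¹' Set.Iic s) = (ENNReal.ofReal q) ^ cc := by
    classical
    set e : Fin cc ↪ Fin cc × Fin ll :=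
      ⟨fun i => (i, j), fun a b h => (Prod.ext_iff.1 h).1⟩ with he
    have h1 := hind.measure_inter_preimage_eq_mul (Finset.univ.map e)
      (sets := fun _ => Set.Iic s) (fun p _ => measurableSet_Iic)
    have h2 : (⋂ p ∈ Finset.univ.map e, (fun p : Fin cc × Fin ll => f p.1 p.2) p ⁻¹' Set.Iic s)
        = ⋂ i, f i j ⁻¹' Set.Iic s := by
      ext ω
      simp only [Set.mem_iInter, Finset.mem_map, Finset.mem_univ, true_and, Set.mem_preimage]
      constructor
      · intro h i
        exact h (i, j) ⟨i, rfl⟩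
      · rintro h p ⟨i, rfl⟩
        exact h i
    rw [h2] at h1
    have h3 : ∀ x : Fin cc, P (f x j ⁻¹' Set.Iic s) = ENNReal.ofReal q := fun x => hq x j
    rw [h1, Finset.prod_map]
    simp only [Function.Embedding.coeFn_mk, he]
    show ∏ x : Fin cc, P (f x j ⁻¹' Set.Iic s) = _
    rw [Finset.prod_congr rfl (fun i _ => h3 i), Finset.prod_const, Finset.card_univ,
      Fintype.card_fin]
  rw [hBset, measure_compl hBmeas (measure_ne_top P _), measure_univ, hPB]

/-- Column events are independent: probability of the intersection over a finset of
columns is the product. -/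
lemma cols_indep {Ω : Type*} [MeasurableSpace Ω] (P : Measure Ω) [IsProbabilityMeasure P]
    {cc ll : ℕ} (f : Fin cc → Fin ll → Ω → ℝ)
    (hmeas : ∀ i j, Measurable (f i j))
    (hind : iIndepFun
      (fun p : Fin cc × Fin ll => f p.1 p.2) P)
    (s : ℝ) :
    ∀ J : Finset (Fin ll),
      P (⋂ j ∈ J, {ω | ∃ i, s < f i j ω}) = ∏ j ∈ J, P {ω | ∃ i, s < f i j ω} := by
  classical
  intro J
  induction J using Finset.induction_on with
  | empty => simp
  | @insert a J haJ ih =>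
    rw [Finset.set_biInter_insert, Finset.prod_insert haJ, ← ih]
    set S : Finset (Fin cc × Fin ll) := Finset.univ ×ˢ {a} with hS
    set Tf : Finset (Fin cc × Fin ll) := Finset.univ ×ˢ J with hTf
    have hdisj : Disjoint S Tf := by
      rw [Finset.disjoint_left]
      rintro ⟨i, j⟩ hpS hpT
      have h1 : j = a := by
        have := (Finset.mem_product.1 hpS).2
        simpa using this
      have h2 : j ∈ J := (Finset.mem_product.1 hpT).2
      exact haJ (h1 ▸ h2)
    have hIF := hind.indepFun_finset S Tf hdisj (fun p => hmeas p.1 p.2)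
    set U : Set (S → ℝ) := {v | ∃ p : S, s < v p} with hU
    set V : Set (Tf → ℝ) := {v | ∀ j ∈ J, ∃ p : Tf, (p : Fin cc × Fin ll).2 = j ∧ s < v p}
      with hV
    have hUm : MeasurableSet U := by
      have : U = ⋃ p : S, (fun v : S → ℝ => v p) ⁻¹' Set.Ioi s := by
        ext v; simp [hU]
      rw [this]
      exact MeasurableSet.iUnion fun p => (measurable_pi_apply p) measurableSet_Ioi
    have hVm : MeasurableSet V := by
      have : V = ⋂ j ∈ J, ⋃ p : Tf, ⋃ (_ : (p : Fin cc × Fin ll).2 = j),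
          (fun v : Tf → ℝ => v p) ⁻¹' Set.Ioi s := by
        ext v
        simp only [hV, Set.mem_setOf_eq, Set.mem_iInter, Set.mem_iUnion, Set.mem_preimage,
          Set.mem_Ioi]
        exact ⟨fun h j hj => (h j hj).imp fun p hp => ⟨hp.1, hp.2⟩,
          fun h j hj => (h j hj).imp fun p hp => ⟨hp.1, hp.2⟩⟩
      rw [this]
      exact MeasurableSet.biInter (Set.to_countable _) fun j _ =>
        MeasurableSet.iUnion fun p => MeasurableSet.iUnion fun _ =>
          (measurable_pi_apply p) measurableSet_Ioi
    have hXU : (fun ω (p : S) => (fun p : Fin cc × Fin ll => f p.1 p.2) p ω) ⁻¹' U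
        = {ω | ∃ i, s < f i a ω} := by
      ext ω
      simp only [Set.mem_preimage, hU, Set.mem_setOf_eq]
      constructor
      · rintro ⟨⟨⟨i, j⟩, hp⟩, h⟩
        have hj : j = a := by
          have := (Finset.mem_product.1 hp).2
          simpa [hS] using this
        exact ⟨i, hj ▸ h⟩
      · rintro ⟨i, h⟩
        exact ⟨⟨(i, a), Finset.mem_product.2 ⟨Finset.mem_univ _, Finset.mem_singleton_self a⟩⟩, h⟩
    have hYV : (fun ω (p : Tf) => (fun p : Fin cc × Fin ll => f p.1 p.2) p ω) ⁻¹' V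
        = ⋂ j ∈ J, {ω | ∃ i, s < f i j ω} := by
      ext ω
      simp only [Set.mem_preimage, hV, Set.mem_setOf_eq, Set.mem_iInter]
      constructor
      · intro h j hj
        obtain ⟨⟨⟨i, j'⟩, hp⟩, h2, h3⟩ := h j hj
        subst h2
        exact ⟨i, h3⟩
      · intro h j hj
        obtain ⟨i, hi⟩ := h j hj
        exact ⟨⟨(i, j), Finset.mem_product.2 ⟨Finset.mem_univ _, hj⟩⟩, rfl, hi⟩
    have := hIF.measure_inter_preimage_eq_mul U V hUm hVm
    rw [hXU, hYV] at this
    exact this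


lemma analytic_limit (F : ℝ → ℝ) (tstar fstar t : ℝ)
    (h0 : 0 < F tstar) (h1 : F tstar < 1)
    (hd : HasDerivAt F fstar tstar)
    (c l : ℕ → ℕ) (hcpos : ∀ n, 0 < c n) (hlpos : ∀ n, 0 < l n)
    (hc : Tendsto c atTop atTop) (hl : Tendsto l atTop atTop)
    (hcouple : Tendsto (fun n => (l n : ℝ) * F tstar ^ c n) atTop (nhds 1)) :
    Tendsto (fun n => (1 - F (tstar + t / c n) ^ c n) ^ l n) atTop
      (nhds (Real.exp (-Real.exp (fstar / F tstar * t)))) := by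
  set ε : ℝ := fstar / F tstar with hε
  have hcR : Tendsto (fun n => (c n : ℝ)) atTop atTop :=
    tendsto_natCast_atTop_atTop.comp hc
  have hlR : Tendsto (fun n => (l n : ℝ)) atTop atTop :=
    tendsto_natCast_atTop_atTop.comp hl
  have hcne : ∀ n, (c n : ℝ) ≠ 0 := fun n => Nat.cast_ne_zero.2 (hcpos n).ne'
  have hlne : ∀ n, (l n : ℝ) ≠ 0 := fun n => Nat.cast_ne_zero.2 (hlpos n).ne'
  set s : ℕ → ℝ := fun n => tstar + t / c n with hs_def
  have hs : Tendsto s atTop (nhds tstar) := by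
    have h2 : Tendsto (fun n => t / (c n : ℝ)) atTop (nhds 0) :=
      Tendsto.div_atTop tendsto_const_nhds hcR
    simpa using tendsto_const_nhds.add h2
  have hFs : Tendsto (fun n => F (s n)) atTop (nhds (F tstar)) :=
    (hd.continuousAt.tendsto).comp hs
  have hFpos : ∀ᶠ n in atTop, 0 < F (s n) := hFs.eventually (eventually_gt_nhds h0)
  -- key slope limit
  have hg : HasDerivAt (fun x => Real.log (F x)) ε tstar := hd.log h0.ne'
  have hkey : Tendsto (fun n => (c n : ℝ) * (Real.log (F (s n)) - Real.log (F tstar)))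
      atTop (nhds (ε * t)) := by
    rcases eq_or_ne t 0 with rfl | ht
    · have : ∀ n, (c n : ℝ) * (Real.log (F (s n)) - Real.log (F tstar)) = 0 := by
        intro n
        simp [hs_def]
      rw [mul_zero]
      exact Tendsto.congr (fun n => (this n).symm) tendsto_const_nhds
    · have hslope := hasDerivAt_iff_tendsto_slope.1 hg
      have hsn : Tendsto s atTop (nhds tstar ⊓ Filter.principal {tstar}ᶜ) := by
        rw [← nhdsWithin]
        refine tendsto_nhdsWithin_of_tendsto_nhds_of_eventually_within _ hs ?_
        refine Eventually.of_forall fun n => ?_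
        have : t / (c n : ℝ) ≠ 0 := div_ne_zero ht (hcne n)
        simp only [hs_def, Set.mem_compl_iff, Set.mem_singleton_iff]
        intro hcontra
        exact this (by linarith)
      have h2 := (hslope.comp hsn).const_mul t
      rw [mul_comm t ε] at h2
      refine Tendsto.congr (fun n => ?_) h2
      have hsub : s n - tstar = t / (c n : ℝ) := by simp [hs_def]
      simp only [Function.comp_apply]
      rw [slope_def_field, hsub]
      field_simp
  -- coupling in logs
  have hclog : Tendsto (fun n => Real.log (l n) + (c n : ℝ) * Real.log (F tstar))
      atTop (nhds 0) := by
    have h2 : Tendsto (fun n => Real.log ((l n : ℝ) * F tstar ^ c n)) atTop (nhds 0) := by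
      have := (Real.continuousAt_log one_ne_zero).tendsto.comp hcouple
      simpa [Function.comp_def] using this
    refine h2.congr fun n => ?_
    rw [Real.log_mul (hlne n) (pow_ne_zero _ h0.ne'), Real.log_pow]
  have hA : Tendsto (fun n => Real.log (l n) + (c n : ℝ) * Real.log (F (s n)))
      atTop (nhds (ε * t)) := by
    have h2 := hclog.add hkey
    rw [zero_add] at h2
    refine Tendsto.congr (fun n => ?_) h2
    ring
  have hq : Tendsto (fun n => (l n : ℝ) * F (s n) ^ c n) atTop
      (nhds (Real.exp (ε * t))) := by
    have h2 := (Real.continuous_exp.tendsto _).comp hA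
    refine Tendsto.congr' ?_ h2
    filter_upwards [hFpos] with n hn
    have hl0 : (0 : ℝ) < l n := Nat.cast_pos.2 (hlpos n)
    simp only [Function.comp]
    rw [Real.exp_add, Real.exp_log hl0, Real.exp_nat_mul, Real.exp_log hn]
  have hq0 : Tendsto (fun n => F (s n) ^ c n) atTop (nhds 0) := by
    have h2 := Tendsto.div_atTop hq hlR
    refine Tendsto.congr (fun n => ?_) h2
    exact mul_div_cancel_left₀ _ (hlne n)
  have hqpos : ∀ᶠ n in atTop, 0 < F (s n) ^ c n := hFpos.mono fun n hn => pow_pos hn _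
  have hqlt1 : ∀ᶠ n in atTop, F (s n) ^ c n < 1 := hq0.eventually (eventually_lt_nhds one_pos)
  have hlog1 : HasDerivAt Real.log 1 1 := by simpa using Real.hasDerivAt_log one_ne_zero
  have hslope1 := hasDerivAt_iff_tendsto_slope.1 hlog1
  have h1q : Tendsto (fun n => 1 - F (s n) ^ c n) atTop
      (nhds 1 ⊓ Filter.principal {1}ᶜ) := by
    rw [← nhdsWithin]
    refine tendsto_nhdsWithin_of_tendsto_nhds_of_eventually_within _ ?_ ?_
    · simpa using (tendsto_const_nhds.sub hq0)
    · filter_upwards [hqpos] with n hn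
      simp only [Set.mem_compl_iff, Set.mem_singleton_iff]
      intro hcontra
      have : F (s n) ^ c n = 0 := by linarith
      exact hn.ne' this
  have hsl := hslope1.comp h1q
  have hmain : Tendsto (fun n => (l n : ℝ) * Real.log (1 - F (s n) ^ c n)) atTop
      (nhds (-Real.exp (ε * t))) := by
    have h2 := (hq.neg).mul hsl
    rw [mul_one] at h2
    refine Tendsto.congr' ?_ h2
    filter_upwards [hqpos] with n hn
    have hne : F (s n) ^ c n ≠ 0 := hn.ne'
    have hd1 : (1 - F (s n) ^ c n) - 1 = -(F (s n) ^ c n) := by ring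
    simp only [Function.comp_apply]
    rw [slope_def_field, Real.log_one, sub_zero, hd1, div_neg, mul_neg, neg_mul, neg_neg]
    field_simp
  have hfin := (Real.continuous_exp.tendsto _).comp hmain
  refine Tendsto.congr' ?_ hfin
  filter_upwards [hqlt1] with n hn
  simp only [Function.comp_apply]
  rw [Real.exp_nat_mul, Real.exp_log (by linarith : (0:ℝ) < 1 - F (s n) ^ c n)]

/-- Gumbel limit-law for the Min-Max: for `cₙ × lₙ` matrices of i.i.d. entries
with distribution function `F` differentiable at `t*` (with `0 < F t* < 1` and
density value `f t* > 0`), under the geometric coupling `lₙ (F t*)^{cₙ} → 1`,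
the scaled Min-Max `cₙ (∨ₘᵢₙ - t*)` converges in law to `-η ⬝ G`, `G` standard
Gumbel: `P(cₙ (∨ₘᵢₙ - t*) > t) → exp (-exp (ε t))` with `ε = f t*/F t*`. -/
theorem minMax_gumbel_limit
    {Ω : Type*} [MeasurableSpace Ω] (P : Measure Ω) [IsProbabilityMeasure P]
    (F : ℝ → ℝ) (tstar fstar : ℝ)
    (h0 : 0 < F tstar) (h1 : F tstar < 1) (hf : 0 < fstar)
    (hd : HasDerivAt F fstar tstar)
    (c l : ℕ → ℕ) (hcpos : ∀ n, 0 < c n) (hlpos : ∀ n, 0 < l n)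
    (hc : Tendsto c atTop atTop) (hl : Tendsto l atTop atTop)
    (hcouple : Tendsto (fun n => (l n : ℝ) * F tstar ^ c n) atTop (nhds 1))
    (T : (n : ℕ) → Fin (c n) → Fin (l n) → Ω → ℝ)
    (hmeas : ∀ n i j, Measurable (T n i j))
    (hindep : ∀ n, iIndepFun
      (fun p : Fin (c n) × Fin (l n) => T n p.1 p.2) P)
    (hF : ∀ n i j t, (P {ω | T n i j ω ≤ t}).toReal = F t)
    (t : ℝ) :
    Tendsto
      (fun n => (P {ω | t < (c n : ℝ) *
          ((Finset.univ.inf' (Finset.univ_nonempty_iff.mpr (Fin.pos_iff_nonempty.mp (hlpos n)))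
              fun j => Finset.univ.sup'
                (Finset.univ_nonempty_iff.mpr (Fin.pos_iff_nonempty.mp (hcpos n)))
                fun i => T n i j ω) - tstar)}).toReal)
      atTop
      (nhds (Real.exp (-Real.exp ((fstar / F tstar) * t)))) := by
  classical
  have hanal := analytic_limit F tstar fstar t h0 h1 hd c l hcpos hlpos hc hl hcouple
  refine Tendsto.congr (fun n => ?_) hanal
  set sn : ℝ := tstar + t / (c n : ℝ) with hsn
  have hc0 : (0 : ℝ) < (c n : ℝ) := Nat.cast_pos.2 (hcpos n)
  have hF0 : 0 ≤ F sn := by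
    rw [← hF 0 ⟨0, hcpos 0⟩ ⟨0, hlpos 0⟩ sn]
    exact ENNReal.toReal_nonneg
  have hF1 : F sn ≤ 1 := by
    rw [← hF 0 ⟨0, hcpos 0⟩ ⟨0, hlpos 0⟩ sn]
    have := prob_le_one (μ := P) (s := {ω | T 0 ⟨0, hcpos 0⟩ ⟨0, hlpos 0⟩ ω ≤ sn})
    calc (P {ω | T 0 ⟨0, hcpos 0⟩ ⟨0, hlpos 0⟩ ω ≤ sn}).toReal
        ≤ (1 : ENNReal).toReal := ENNReal.toReal_mono ENNReal.one_ne_top this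
      _ = 1 := ENNReal.toReal_one
  have hq : ∀ (i : Fin (c n)) (j : Fin (l n)),
      P {ω | T n i j ω ≤ sn} = ENNReal.ofReal (F sn) := by
    intro i j
    rw [← hF n i j sn]
    exact (ENNReal.ofReal_toReal (measure_ne_top P _)).symm
  have hset : {ω | t < (c n : ℝ) *
      ((Finset.univ.inf' (Finset.univ_nonempty_iff.mpr (Fin.pos_iff_nonempty.mp (hlpos n)))
          fun j => Finset.univ.sup'
            (Finset.univ_nonempty_iff.mpr (Fin.pos_iff_nonempty.mp (hcpos n)))
            fun i => T n i j ω) - tstar)}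
      = ⋂ j ∈ (Finset.univ : Finset (Fin (l n))), {ω | ∃ i, sn < T n i j ω} := by
    ext ω
    simp only [Set.mem_setOf_eq, Set.mem_iInter]
    rw [mul_comm, ← div_lt_iff₀ hc0, lt_sub_iff_add_lt', Finset.lt_inf'_iff]
    simp only [Finset.lt_sup'_iff, Finset.mem_univ, true_and, Set.mem_setOf_eq, true_implies]
    exact Iff.rfl
  rw [hset, cols_indep P (T n) (hmeas n) (hindep n) sn Finset.univ,
    Finset.prod_congr rfl (fun j _ => col_prob P (T n) (hmeas n) (hindep n) sn (F sn) hq j),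
    Finset.prod_const, Finset.card_univ, Fintype.card_fin]
  have hle : (ENNReal.ofReal (F sn)) ^ c n ≤ 1 :=
    pow_le_one' (ENNReal.ofReal_le_one.2 hF1) _
  rw [ENNReal.toReal_pow, ENNReal.toReal_sub_of_le hle ENNReal.one_ne_top,
    ENNReal.toReal_one, ENNReal.toReal_pow, ENNReal.toReal_ofReal hF0]
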